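/- Let Λ be the Iwasawa algebra O[[T]] over the ring of integers O of a finite extension of Q_p (a 2-dimensional regular local ring). If I ⊆ A are ideals of Λ with A of finite index in Λ (as an O-module quotient Λ/A is finite), then I ⊆ Fitt_Λ(A/I). -/

import Mathlib

open PowerSeries

/-- The 0-th Fitting ideal of a module `M` over a commutative ring `R`:
the ideal generated by determinants of square matrices of relations among
a finite generating set of `M`. -/
def fittingIdeal (R : Type*) [CommRing R] (M : Type*) [AddCommGroup M] [Module R M] :
    Ideal R :=
  Ideal.span { d : R | ∃ (n : ℕ) (π : ((Fin n → R) →ₗ[R] M))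
    (A : Matrix (Fin n) (Fin n) R),
      Function.Surjective π ∧ (∀ i, π (A i) = 0) ∧ d = A.det }

lemma det_mem_fittingIdeal {R : Type*} [CommRing R] {M : Type*} [AddCommGroup M] [Module R M]
    (n : ℕ) (π : ((Fin n → R) →ₗ[R] M)) (A : Matrix (Fin n) (Fin n) R)
    (hsurj : Function.Surjective π) (hrel : ∀ i, π (A i) = 0) :
    A.det ∈ fittingIdeal R M :=
  Ideal.subset_span ⟨n, π, A, hsurj, hrel, rfl⟩

section transport

variable {R R' : Type*} [CommRing R] [CommRing R'] (e : R ≃+* R')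
  {M M' : Type*} [AddCommGroup M] [Module R M] [AddCommGroup M'] [Module R' M']
  (σ : M ≃+ M') (hσ : ∀ (r : R) (m : M), σ (r • m) = e r • σ m)

include hσ in
lemma fittingIdeal_le_transport :
    (fittingIdeal R M).map (e : R →+* R') ≤ fittingIdeal R' M' := by
  rw [fittingIdeal, Ideal.map_span]
  apply Ideal.span_mono
  rintro _ ⟨d, ⟨n, π, A, hsurj, hrel, rfl⟩, rfl⟩
  refine ⟨n, ?_, (e : R →+* R').mapMatrix A, ?_, ?_, ?_⟩
  · exact
    { toFun := fun v => σ (π (fun i => e.symm (v i)))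
      map_add' := by
        intro v w
        show σ (π fun i => e.symm ((v + w) i)) = σ (π _) + σ (π _)
        rw [← map_add σ, ← map_add π]
        congr 2
        funext i
        simp [map_add]
      map_smul' := by
        intro r v
        simp only [RingHom.id_apply]
        show σ (π fun i => e.symm ((r • v) i)) = r • σ (π _)
        have : (fun i => e.symm ((r • v) i)) = e.symm r • fun i => e.symm (v i) := by
          funext i; simp [Pi.smul_apply, smul_eq_mul, map_mul]
        rw [this, map_smul, hσ, e.apply_symm_apply] }
  · intro m'
    obtain ⟨m, rfl⟩ := σ.surjective m'
    obtain ⟨v, rfl⟩ := hsurj m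
    exact ⟨fun i => e (v i), by simp⟩
  · intro i
    have : (fun j => e.symm ((e : R →+* R').mapMatrix A i j)) = A i := by
      funext j; simp
    simp only [LinearMap.coe_mk, AddHom.coe_mk]
    rw [show ((e : R →+* R').mapMatrix A i) = fun j => e (A i j) from rfl]
    simpa using congrArg σ (hrel i)
  · exact RingHom.map_det (e : R →+* R') A

include hσ in
lemma mem_fittingIdeal_of_transport {x : R} (hx : e x ∈ fittingIdeal R' M') :
    x ∈ fittingIdeal R M := by
  have hσ' : ∀ (r' : R') (m' : M'), σ.symm (r' • m') = e.symm r' • σ.symm m' := by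
    intro r' m'
    apply σ.injective
    rw [σ.apply_symm_apply, hσ, e.apply_symm_apply, σ.apply_symm_apply]
  have h2 := fittingIdeal_le_transport e.symm σ.symm hσ'
  have := h2 (Ideal.mem_map_of_mem (e.symm : R' →+* R) hx)
  simpa using this

end transport


section helpers

variable {O : Type*} [CommRing O]

/-- The `O`-linear map sending `v : Fin k → O` to `∑ vᵢ X^i`. -/
noncomputable def iotaL (O : Type*) [CommRing O] (k : ℕ) : (Fin k → O) →ₗ[O] PowerSeries O where
  toFun v := ∑ i : Fin k, PowerSeries.C (v i) * X ^ (i : ℕ)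
  map_add' v w := by
    rw [← Finset.sum_add_distrib]
    congr 1; funext i; simp [add_mul]
  map_smul' o v := by
    rw [Finset.smul_sum]
    congr 1; funext i
    simp [smul_eq_C_mul, mul_assoc]

/-- Coefficient shift on `Fin k → O` (multiplication by `X` modulo `X^k`). -/
def shiftL (O : Type*) [CommRing O] (k : ℕ) : (Fin k → O) →ₗ[O] (Fin k → O) where
  toFun v j := if h : 0 < (j : ℕ) then v ⟨(j : ℕ) - 1, lt_of_le_of_lt (Nat.sub_le _ _) j.isLt⟩ else 0
  map_add' v w := by funext j; by_cases h : 0 < (j : ℕ) <;> simp [h]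
  map_smul' o v := by funext j; by_cases h : 0 < (j : ℕ) <;> simp [h]

/-- Top coefficient. -/
def topL (O : Type*) [CommRing O] (k : ℕ) : (Fin k → O) →ₗ[O] O where
  toFun v := if h : 0 < k then v ⟨k - 1, Nat.sub_lt h one_pos⟩ else 0
  map_add' v w := by by_cases h : 0 < k <;> simp [h]
  map_smul' o v := by by_cases h : 0 < k <;> simp [h]

lemma key1 (k : ℕ) (v : Fin k → O) :
    X * iotaL O k v = iotaL O k (shiftL O k v) + PowerSeries.C (topL O k v) * X ^ k := by
  rcases Nat.eq_zero_or_pos k with hk | hk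
  · subst hk
    simp [iotaL, topL, shiftL]
  · obtain ⟨m, rfl⟩ : ∃ m, k = m + 1 := ⟨k - 1, (Nat.succ_pred_eq_of_pos hk).symm⟩
    show X * ∑ i : Fin (m+1), PowerSeries.C (v i) * X ^ (i:ℕ)
      = (∑ j : Fin (m+1), PowerSeries.C (shiftL O (m+1) v j) * X ^ (j:ℕ)) + _
    rw [Finset.mul_sum]
    rw [Fin.sum_univ_castSucc (f := fun i => X * (PowerSeries.C (v i) * X ^ (i:ℕ)))]
    rw [Fin.sum_univ_succ (f := fun j => PowerSeries.C (shiftL O (m+1) v j) * X ^ (j:ℕ))]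
    have h0 : shiftL O (m+1) v 0 = 0 := by simp [shiftL]
    have hsucc : ∀ j : Fin m, shiftL O (m+1) v j.succ = v j.castSucc := by
      intro j
      have hpos : (0:ℕ) < (j.succ : ℕ) := by rw [Fin.val_succ]; omega
      simp only [shiftL, LinearMap.coe_mk, AddHom.coe_mk, dif_pos hpos]
      apply congrArg
      ext
      simp [Fin.val_succ]
    have htop : topL O (m+1) v = v (Fin.last m) := by
      simp only [topL, LinearMap.coe_mk, AddHom.coe_mk, dif_pos (Nat.succ_pos m)]
      rfl
    rw [h0, htop]
    simp only [map_zero, zero_mul, zero_add]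
    congr 1
    · congr 1
      funext j
      rw [hsucc j]
      ring_nf
      rw [Fin.val_succ, Fin.coe_castSucc]
      ring
    · rw [Fin.val_last]
      ring

lemma coeff_iotaL (k : ℕ) (v : Fin k → O) (j : ℕ) :
    (PowerSeries.coeff j) (iotaL O k v) = if h : j < k then v ⟨j, h⟩ else 0 := by
  simp only [iotaL, LinearMap.coe_mk, AddHom.coe_mk, map_sum, coeff_C_mul, coeff_X_pow]
  split_ifs with h
  · rw [Finset.sum_eq_single (⟨j, h⟩ : Fin k)]
    · simp
    · intro b _ hb
      have : j ≠ (b : ℕ) := by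
        intro hc; apply hb; ext; simp [hc.symm]
      simp [this]
    · simp
  · apply Finset.sum_eq_zero
    intro b _
    have : j ≠ (b : ℕ) := fun hc => h (hc ▸ b.isLt)
    simp [this]

lemma key2 (k : ℕ) (a : PowerSeries O) :
    a = iotaL O k (fun i => PowerSeries.coeff (i : ℕ) a)
      + X ^ k * PowerSeries.mk (fun j => PowerSeries.coeff (j + k) a) := by
  ext j
  rw [map_add, coeff_iotaL, PowerSeries.coeff_X_pow_mul']
  split_ifs with h h2 h2
  · omega
  · simp
  · rw [PowerSeries.coeff_mk]
    have : j - k + k = j := Nat.sub_add_cancel h2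
    rw [this, zero_add]
  · omega

lemma shiftL_pow_eq_zero (k : ℕ) : (shiftL O k) ^ k = 0 := by
  have key : ∀ (m : ℕ) (v : Fin k → O) (j : Fin k), (j : ℕ) < m → ((shiftL O k) ^ m) v j = 0 := by
    intro m
    induction m with
    | zero => intro v j h; omega
    | succ m ih =>
      intro v j h
      rw [pow_succ', Module.End.mul_apply]
      show (shiftL O k) (((shiftL O k) ^ m) v) j = 0
      by_cases h0 : 0 < (j : ℕ)
      · simp only [shiftL, LinearMap.coe_mk, AddHom.coe_mk, dif_pos h0]
        exact ih _ _ (show (j:ℕ) - 1 < m by omega)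
      · simp [shiftL, h0]
  apply LinearMap.ext
  intro v
  funext j
  show ((shiftL O k) ^ k) v j = (0 : O)
  exact key k v j j.isLt

end helpers

section main
variable {O : Type*} [CommRing O] [IsDomain O] [IsPrincipalIdealRing O]

local notation "R" => PowerSeries O

set_option maxHeartbeats 1600000 in
lemma main_powerseries (I A : Ideal (PowerSeries O)) (hIA : I ≤ A)
    (k : ℕ) (hX : (X : PowerSeries O) ^ k ∈ A) :
    I ≤ fittingIdeal (PowerSeries O)
      (↥A ⧸ (Submodule.comap A.subtype I)) := by
  classical
  intro x hx
  set S : Submodule O (Fin k → O) :=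
    Submodule.comap (iotaL O k) (Submodule.restrictScalars O (A : Submodule R R)) with hS
  have hmemS : ∀ v : Fin k → O, v ∈ S ↔ iotaL O k v ∈ A := fun v => Iff.rfl
  obtain ⟨n, b⟩ := Submodule.basisOfPid (Pi.basisFun O (Fin k)) S
  have hnk : n ≤ k := by
    have := Module.Basis.card_le_card_of_linearIndependent (Pi.basisFun O (Fin k))
      ((b.linearIndependent).map' S.subtype (Submodule.ker_subtype S))
    simpa using this
  set g : Fin n → (Fin k → O) := fun i => (b i : Fin k → O) with hg
  have hgA : ∀ i, iotaL O k (g i) ∈ A := fun i => (b i).2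
  -- the shift restricts to S
  have hstab : ∀ v ∈ S, shiftL O k v ∈ S := by
    intro v hv
    rw [hmemS] at hv ⊢
    have h1 : iotaL O k (shiftL O k v)
        = X * iotaL O k v - PowerSeries.C (topL O k v) * X ^ k := by
      rw [key1 k v]; ring
    rw [h1]
    exact sub_mem (Ideal.mul_mem_left _ _ hv) (Ideal.mul_mem_left _ _ hX)
  set sL : ↥S →ₗ[O] ↥S := (shiftL O k).restrict hstab with hsL
  have hsL_coe : ∀ (m : ℕ) (v : ↥S), ((sL ^ m) v : Fin k → O) = ((shiftL O k) ^ m) (v : Fin k → O) := by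
    intro m
    induction m with
    | zero => intro v; simp
    | succ m ih =>
      intro v
      rw [pow_succ', pow_succ', Module.End.mul_apply, Module.End.mul_apply]
      rw [LinearMap.restrict_coe_apply, ih]
  have hsLk : sL ^ k = 0 := by
    apply LinearMap.ext; intro v
    apply Subtype.ext
    rw [hsL_coe k v, shiftL_pow_eq_zero]
    rfl
  set t : Matrix (Fin n) (Fin n) O := LinearMap.toMatrix b b sL with ht
  have ht_pow : ∀ m : ℕ, t ^ m = LinearMap.toMatrix b b (sL ^ m) := by
    intro m
    induction m with
    | zero =>
      rw [pow_zero, pow_zero, Module.End.one_eq_id]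
      exact (LinearMap.toMatrix_id b).symm
    | succ m ih => rw [pow_succ, pow_succ, ih, ← LinearMap.toMatrix_comp b b b]; rfl
  have htk : t ^ k = 0 := by rw [ht_pow k, hsLk]; exact (LinearMap.toMatrix b b).map_zero
  have hcharpoly : t.charpoly = Polynomial.X ^ n := by
    have h1 := Matrix.isNilpotent_charpoly_sub_pow_of_isNilpotent (M := t) ⟨k, htk⟩
    have h2 : t.charpoly - Polynomial.X ^ Fintype.card (Fin n) = 0 := h1.eq_zero
    rw [sub_eq_zero] at h2
    simpa using h2
  -- the matrix over R
  set φ : Polynomial O →+* R := (Polynomial.aeval (X : R)).toRingHom with hφ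
  set B : Matrix (Fin n) (Fin n) R := ((Matrix.charmatrix t).transpose).map φ with hB
  have hdetB : B.det = (X : R) ^ n := by
    rw [hB, ← RingHom.mapMatrix_apply, ← RingHom.map_det, Matrix.det_transpose]
    show φ t.charpoly = _
    rw [hcharpoly]
    simp [hφ]
  set d : Fin n → O := fun i => topL O k (g i) with hd
  have hBij : ∀ i j, B i j = (if j = i then (X : R) else 0) - PowerSeries.C (t j i) := by
    intro i j
    rw [hB]
    show φ ((Matrix.charmatrix t) j i) = _
    by_cases h : j = i
    · subst h
      rw [Matrix.charmatrix_apply_eq, map_sub, if_pos rfl]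
      simp [hφ, Polynomial.aeval_C, ← PowerSeries.C_eq_algebraMap]
    · rw [Matrix.charmatrix_apply_ne _ _ _ h, map_neg, if_neg h]
      simp [hφ, Polynomial.aeval_C, ← PowerSeries.C_eq_algebraMap]
  have hsum_repr : ∀ i, ∑ j, PowerSeries.C (t j i) * iotaL O k (g j)
      = iotaL O k (shiftL O k (g i)) := by
    intro i
    have h1 : ∀ j, PowerSeries.C (t j i) * iotaL O k (g j) = iotaL O k ((t j i) • g j) := by
      intro j; rw [map_smul, smul_eq_C_mul]
    calc ∑ j, PowerSeries.C (t j i) * iotaL O k (g j)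
        = ∑ j, iotaL O k ((t j i) • g j) := by
          exact Finset.sum_congr rfl (fun j _ => h1 j)
      _ = iotaL O k (∑ j, (t j i) • g j) := by rw [map_sum]
      _ = iotaL O k (shiftL O k (g i)) := by
          congr 1
          have h2 : ∑ j, (t j i) • g j = ((∑ j, (t j i) • b j : ↥S) : Fin k → O) := by
            rw [Submodule.coe_sum]  -- may need AddSubmonoidClass.coe_finset_sum
            rfl
          rw [h2]
          have h3 : (∑ j, (t j i) • b j : ↥S) = sL (b i) := by
            have h4 : ∀ j, t j i = b.repr (sL (b i)) j := by
              intro j; rw [ht, LinearMap.toMatrix_apply]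
            rw [show (∑ j, (t j i) • b j : ↥S) = ∑ j, (b.repr (sL (b i)) j) • b j from
              Finset.sum_congr rfl (fun j _ => by rw [h4 j])]
            exact Module.Basis.sum_repr b (sL (b i))
          rw [h3, hsL, LinearMap.restrict_coe_apply]
  have hsyz : ∀ i, ∑ j, B i j * iotaL O k (g j) = PowerSeries.C (d i) * X ^ k := by
    intro i
    have e1 : ∑ j, B i j * iotaL O k (g j)
        = (∑ j, (if j = i then (X : R) else 0) * iotaL O k (g j))
          - ∑ j, PowerSeries.C (t j i) * iotaL O k (g j) := by
      rw [← Finset.sum_sub_distrib]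
      exact Finset.sum_congr rfl (fun j _ => by rw [hBij i j]; ring)
    have e2 : ∑ j, (if j = i then (X : R) else 0) * iotaL O k (g j) = X * iotaL O k (g i) := by
      rw [show (∑ j, (if j = i then (X : R) else 0) * iotaL O k (g j))
          = ∑ j, (if j = i then X * iotaL O k (g j) else 0) from
        Finset.sum_congr rfl (fun j _ => by split_ifs <;> simp)]
      rw [Finset.sum_ite_eq' Finset.univ i (fun j => X * iotaL O k (g j))]
      simp
    rw [e1, e2, hsum_repr, key1 k (g i)]
    rw [show topL O k (g i) = d i from rfl]
    ring
  -- generators of A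
  set G : Fin (n+1) → R := Fin.cons ((X : R)^k) (fun j => iotaL O k (g j)) with hG
  have hGA : ∀ j, G j ∈ A := by
    intro j
    refine Fin.cases ?_ ?_ j
    · rw [hG, Fin.cons_zero]; exact hX
    · intro i; rw [hG, Fin.cons_succ]; exact hgA i
  have hAspan : ∀ a : R, a ∈ A → a ∈ Submodule.span R (Set.range G) := by
    intro a ha
    have hdec := key2 k a
    set va : Fin k → O := fun i => PowerSeries.coeff (i : ℕ) a with hva'
    set Q : R := PowerSeries.mk (fun j => PowerSeries.coeff (j + k) a) with hQ'
    have hQ : X^k * Q ∈ Submodule.span R (Set.range G) := by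
      have h0 : (X : R)^k ∈ Submodule.span R (Set.range G) :=
        Submodule.subset_span ⟨0, by rw [hG, Fin.cons_zero]⟩
      have h1 := Submodule.smul_mem (Submodule.span R (Set.range G)) Q h0
      rwa [smul_eq_mul, mul_comm] at h1
    have hvaS : va ∈ S := by
      rw [hmemS]
      have h2 : iotaL O k va = a - X^k * Q := by
        conv_rhs => rw [hdec]
        ring
      rw [h2]
      exact sub_mem ha (Ideal.mul_mem_right Q A hX)
    have hrep : iotaL O k va ∈ Submodule.span R (Set.range G) := by
      have h5 : (⟨va, hvaS⟩ : ↥S) = ∑ j, (b.repr ⟨va, hvaS⟩ j) • b j := (Module.Basis.sum_repr b _).symm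
      have h6 : va = ∑ j, (b.repr ⟨va, hvaS⟩ j) • g j := by
        have h7 := congrArg (Subtype.val) h5
        rw [Submodule.coe_sum] at h7
        exact h7
      rw [h6, map_sum]
      apply Submodule.sum_mem
      intro j _
      rw [map_smul, smul_eq_C_mul]
      have h8 : iotaL O k (g j) ∈ Submodule.span R (Set.range G) :=
        Submodule.subset_span ⟨j.succ, by rw [hG, Fin.cons_succ]⟩
      have h9 := Submodule.smul_mem (Submodule.span R (Set.range G))
        (PowerSeries.C (b.repr ⟨va, hvaS⟩ j)) h8
      rwa [smul_eq_mul] at h9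
    rw [hdec]
    exact add_mem hrep hQ
  -- the presentation
  set N : Submodule R ↥A := Submodule.comap (Submodule.subtype A) I with hN
  set G' : Fin (n+1) → ↥A := fun j => ⟨G j, hGA j⟩ with hG'
  set τ : (Fin (n+1) → R) →ₗ[R] ↥A := Fintype.linearCombination R G' with hτ
  have hτval : ∀ v : Fin (n+1) → R, ((τ v : ↥A) : R) = ∑ j, v j * G j := by
    intro v
    rw [hτ, Fintype.linearCombination_apply, Submodule.coe_sum]
    refine Finset.sum_congr rfl (fun j _ => ?_)
    rw [Submodule.coe_smul, smul_eq_mul]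
  set π : (Fin (n+1) → R) →ₗ[R] (↥A ⧸ N) := (Submodule.mkQ N).comp τ with hπ
  have hπsurj : Function.Surjective π := by
    intro m
    obtain ⟨a, rfl⟩ := Submodule.mkQ_surjective N m
    obtain ⟨c0, hc0⟩ := (Submodule.mem_span_range_iff_exists_fun R).mp (hAspan a.1 a.2)
    refine ⟨c0, ?_⟩
    rw [hπ, LinearMap.comp_apply]
    congr 1
    apply Subtype.ext
    rw [hτval]
    simpa [smul_eq_mul] using hc0
  -- the relation matrix
  obtain ⟨c, hc⟩ := (Submodule.mem_span_range_iff_exists_fun R).mp (hAspan x (hIA hx))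
  set Mx : Matrix (Fin (n+1)) (Fin (n+1)) R :=
    Matrix.of (Fin.cons c (fun i => Fin.cons (-(PowerSeries.C (d i))) (B i))) with hMx
  have hMx00 : ∀ j, Mx 0 j = c j := by
    intro j
    show (Fin.cons c (fun i => Fin.cons (-(PowerSeries.C (d i))) (B i)) : _ → _) 0 j = _
    rw [Fin.cons_zero]
  have hMxs0 : ∀ i : Fin n, Mx i.succ 0 = -(PowerSeries.C (d i)) := by
    intro i
    show (Fin.cons c (fun i => Fin.cons (-(PowerSeries.C (d i))) (B i)) : _ → _) i.succ 0
      = _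
    rw [Fin.cons_succ, Fin.cons_zero]
  have hMxss : ∀ (i j : Fin n), Mx i.succ j.succ = B i j := by
    intro i j
    show (Fin.cons c (fun i => Fin.cons (-(PowerSeries.C (d i))) (B i)) : _ → _) i.succ j.succ
      = _
    rw [Fin.cons_succ, Fin.cons_succ]
  have hrow0 : ∑ j, Mx 0 j * G j = x := by
    rw [show (∑ j, Mx 0 j * G j) = ∑ j, c j * G j from
      Finset.sum_congr rfl (fun j _ => by rw [hMx00 j])]
    simpa [smul_eq_mul] using hc
  have hrowsucc : ∀ i : Fin n, ∑ j, Mx i.succ j * G j = 0 := by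
    intro i
    rw [Fin.sum_univ_succ, hMxs0 i]
    have e : ∑ j : Fin n, Mx i.succ j.succ * G j.succ = ∑ j, B i j * iotaL O k (g j) :=
      Finset.sum_congr rfl (fun j _ => by rw [hMxss i j, hG, Fin.cons_succ])
    rw [e, hsyz i, hG, Fin.cons_zero]
    ring
  have hrel : ∀ i, π (Mx i) = 0 := by
    intro i
    rw [hπ, LinearMap.comp_apply, Submodule.mkQ_apply, Submodule.Quotient.mk_eq_zero, hN,
      Submodule.mem_comap, Submodule.subtype_apply, hτval]
    refine Fin.cases ?_ ?_ i
    · rw [hrow0]; exact hx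
    · intro i'; rw [hrowsucc i']; exact I.zero_mem
  -- adjugate / cofactor computations
  set Cv : Fin (n+1) → R := fun j => Mx.adjugate j 0 with hCv
  have hMxadj : ∀ i : Fin (n+1), ∑ j, Mx i j * Cv j = (if i = 0 then Mx.det else 0) := by
    intro i
    have h1 := congrFun (congrFun (Matrix.mul_adjugate Mx) i) 0
    rw [Matrix.mul_apply] at h1
    rw [show (∑ j, Mx i j * Cv j) = ∑ j, Mx i j * Mx.adjugate j 0 from rfl, h1]
    by_cases h : i = 0
    · subst h; simp
    · rw [if_neg h]
      rw [Matrix.smul_apply, Matrix.one_apply_ne h, smul_zero]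
  have hCv0 : Cv 0 = B.det := by
    show Mx.adjugate 0 0 = B.det
    rw [Matrix.adjugate_apply, Matrix.det_succ_row_zero]
    rw [Finset.sum_eq_single (0 : Fin (n+1))]
    · rw [Matrix.updateRow_self]
      have hsub : (Mx.updateRow 0 (Pi.single 0 1)).submatrix Fin.succ
          ((0 : Fin (n+1)).succAbove) = B := by
        funext i j
        rw [Fin.succAbove_zero, Matrix.submatrix_apply,
          Matrix.updateRow_ne (Fin.succ_ne_zero i), hMxss]
      rw [hsub]
      simp
    · intro bb _ hbb
      have hz : (Mx.updateRow 0 (Pi.single 0 1)) 0 bb = 0 := by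
        rw [Matrix.updateRow_self]
        exact Pi.single_eq_of_ne hbb 1
      rw [hz]; ring
    · intro h; exact absurd (Finset.mem_univ _) h
  set w : Fin n → R := fun i => Cv i.succ with hwdef
  have hE2 : ∀ i : Fin n, ∑ j, B i j * w j = PowerSeries.C (d i) * (X:R)^n := by
    intro i
    have h1 := hMxadj i.succ
    rw [if_neg (Fin.succ_ne_zero i), Fin.sum_univ_succ, hMxs0 i, hCv0, hdetB] at h1
    have h2 : ∑ j : Fin n, Mx i.succ j.succ * Cv j.succ = ∑ j, B i j * w j :=
      Finset.sum_congr rfl (fun j _ => by rw [hMxss i j])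
    rw [h2] at h1
    linear_combination h1
  have hpowkn : (X:R)^(k-n) * (X:R)^n = (X:R)^k := by
    rw [← pow_add, Nat.sub_add_cancel hnk]
  have hkey : ∀ j : Fin n, (X:R)^(k-n) * w j = iotaL O k (g j) := by
    set u : Fin n → R := fun j => (X:R)^(k-n) * w j - iotaL O k (g j) with hu
    have hBu : B.mulVec u = 0 := by
      funext i
      show ∑ j, B i j * u j = 0
      have h3 : ∑ j, B i j * u j
          = (X:R)^(k-n) * (∑ j, B i j * w j) - ∑ j, B i j * iotaL O k (g j) := by
        rw [Finset.mul_sum, ← Finset.sum_sub_distrib]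
        exact Finset.sum_congr rfl (fun j _ => by rw [hu]; ring)
      rw [h3, hE2 i, hsyz i, ← mul_assoc, mul_comm ((X:R)^(k-n)) (PowerSeries.C (d i)),
        mul_assoc, hpowkn]
      ring
    have h4 : B.det • u = 0 := by
      have h5 : (B.adjugate).mulVec (B.mulVec u) = 0 := by rw [hBu, Matrix.mulVec_zero]
      rwa [Matrix.mulVec_mulVec, Matrix.adjugate_mul, Matrix.smul_mulVec,
        Matrix.one_mulVec] at h5
    intro j
    have h6 : B.det * u j = 0 := congrFun h4 j
    rw [hdetB] at h6
    have h7 : u j = 0 := by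
      rcases mul_eq_zero.mp h6 with h | h
      · exact absurd h (pow_ne_zero n PowerSeries.X_ne_zero)
      · exact h
    have := sub_eq_zero.mp (by rw [hu] at h7; exact h7)
    exact this
  have hdetMx := hMxadj 0
  rw [if_pos rfl] at hdetMx
  have hxdet : x = (X:R)^(k-n) * Mx.det := by
    rw [← hdetMx, Finset.mul_sum, ← hrow0]
    rw [Fin.sum_univ_succ, Fin.sum_univ_succ]
    have e0 : Mx 0 0 * G 0 = (X:R)^(k-n) * (Mx 0 0 * Cv 0) := by
      rw [hCv0, hdetB, hMx00, hG, Fin.cons_zero]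
      rw [show c 0 * (X:R)^k = c 0 * ((X:R)^(k-n) * (X:R)^n) by rw [hpowkn]]
      ring
    have es : ∀ j : Fin n, Mx 0 j.succ * G j.succ = (X:R)^(k-n) * (Mx 0 j.succ * Cv j.succ) := by
      intro j
      rw [hMx00, hG, Fin.cons_succ, ← hkey j]
      show c j.succ * ((X:R)^(k-n) * w j) = (X:R)^(k-n) * (c j.succ * Cv j.succ)
      rw [hwdef]
      ring
    rw [e0]
    congr 1
    exact Finset.sum_congr rfl (fun j _ => es j)
  have hfit : Mx.det ∈ fittingIdeal R (↥A ⧸ N) :=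
    det_mem_fittingIdeal (n+1) π Mx hπsurj hrel
  rw [hxdet]
  exact Ideal.mul_mem_left _ _ hfit

end main

section padic

variable (p : ℕ) [Fact p.Prime] (K : Type*) [Field K]
    [Algebra ℚ_[p] K] [FiniteDimensional ℚ_[p] K]
    [Algebra ℤ_[p] K] [IsScalarTower ℤ_[p] ℚ_[p] K]

theorem integralClosure_pid : IsPrincipalIdealRing (integralClosure ℤ_[p] K) := by
  haveI : CharZero K := charZero_of_injective_algebraMap (algebraMap ℚ_[p] K).injective
  haveI := Algebra.IsAlgebraic.of_finite ℚ_[p] K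
  haveI hsep : Algebra.IsSeparable ℚ_[p] K := inferInstance
  haveI hded : IsDedekindDomain (integralClosure ℤ_[p] K) :=
    IsIntegralClosure.isDedekindDomain ℤ_[p] ℚ_[p] K _
  haveI hnoe : IsNoetherian ℤ_[p] (integralClosure ℤ_[p] K) :=
    IsIntegralClosure.isNoetherian ℤ_[p] ℚ_[p] K _
  haveI hfinmod : Module.Finite ℤ_[p] (integralClosure ℤ_[p] K) :=
    ⟨IsNoetherian.noetherian ⊤⟩
  haveI hint : Algebra.IsIntegral ℤ_[p] (integralClosure ℤ_[p] K) :=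
    Algebra.IsIntegral.of_finite _ _
  set O' := integralClosure ℤ_[p] K with hO'
  set J : Ideal O' := Ideal.span {(p : O')} with hJ
  have hfinquot : Finite (O' ⧸ J) := by
    obtain ⟨r, v, hv⟩ := Module.Finite.exists_fin (R := ℤ_[p]) (M := O')
    have hsurj : Function.Surjective
        (fun z : Fin r → ZMod p => Ideal.Quotient.mk J (∑ i, ((z i).val : O') * v i)) := by
      intro y
      obtain ⟨a, rfl⟩ := Ideal.Quotient.mk_surjective y
      have ha : a ∈ Submodule.span ℤ_[p] (Set.range v) := by rw [hv]; trivial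
      obtain ⟨c, hc⟩ := (Submodule.mem_span_range_iff_exists_fun ℤ_[p]).mp ha
      refine ⟨fun i => PadicInt.toZMod (c i), ?_⟩
      rw [Ideal.Quotient.eq]
      have hterm : ∀ i : Fin r,
          (((PadicInt.toZMod (c i)).val : O') * v i - c i • v i) ∈ J := by
        intro i
        have h1 : (((PadicInt.toZMod (c i)).val : ℤ_[p]) - c i) ∈ RingHom.ker PadicInt.toZMod := by
          rw [RingHom.mem_ker, map_sub, map_natCast, ZMod.natCast_val, ZMod.cast_id, sub_self]
        rw [PadicInt.ker_toZMod, PadicInt.maximalIdeal_eq_span_p] at h1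
        obtain ⟨dd, hdd⟩ := Ideal.mem_span_singleton'.mp h1
        have h2 : (((PadicInt.toZMod (c i)).val : O') * v i - c i • v i)
            = ((((PadicInt.toZMod (c i)).val : ℤ_[p]) - c i) • v i) := by
          rw [sub_smul]
          congr 1
          rw [Algebra.smul_def, map_natCast]
        rw [h2, ← hdd, mul_smul]
        refine Submodule.smul_of_tower_mem J dd ?_
        rw [Algebra.smul_def, map_natCast]
        exact Ideal.mul_mem_right _ _ (Ideal.subset_span (Set.mem_singleton _))
      have hsum : (∑ i, ((PadicInt.toZMod (c i)).val : O') * v i) - a ∈ J := by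
        rw [show (∑ i, ((PadicInt.toZMod (c i)).val : O') * v i) - a
            = ∑ i, (((PadicInt.toZMod (c i)).val : O') * v i - c i • v i) by
          rw [Finset.sum_sub_distrib, ← hc]]
        exact Submodule.sum_mem _ (fun i _ => hterm i)
      exact hsum
    exact Finite.of_surjective _ hsurj
  have hPfin : {P : Ideal O' | P.IsPrime}.Finite := by
    haveI : Finite (Ideal (O' ⧸ J)) :=
      Finite.of_injective (fun I : Ideal (O' ⧸ J) => (I : Set (O' ⧸ J))) SetLike.coe_injective
    have hsub : {P : Ideal O' | P.IsPrime} ⊆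
        insert ⊥ ((fun Q : Ideal (O' ⧸ J) => Ideal.comap (Ideal.Quotient.mk J) Q) '' Set.univ) := by
      intro P hP
      haveI hPp : P.IsPrime := hP
      rcases eq_or_ne P ⊥ with h | h
      · exact Set.mem_insert_iff.mpr (Or.inl h)
      · refine Set.mem_insert_iff.mpr (Or.inr ⟨Ideal.map (Ideal.Quotient.mk J) P, Set.mem_univ _, ?_⟩)
        have hJP : J ≤ P := by
          obtain ⟨a, haP, ha0⟩ := Submodule.ne_bot_iff P |>.mp h
          have hqa := Ideal.comap_ne_bot_of_integral_mem ha0 haP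
            (Algebra.IsIntegral.isIntegral (R := ℤ_[p]) a)
          set q := Ideal.comap (algebraMap ℤ_[p] O') P with hq
          haveI hqp : q.IsPrime := Ideal.IsPrime.comap _
          obtain ⟨z₀, hz₀⟩ := (IsPrincipalIdealRing.principal q).principal
          have hz0ne : z₀ ≠ 0 := by
            intro hcon
            apply hqa
            rw [hz₀, hcon]
            simp
          have hz₀mem : z₀ ∈ q := by rw [hz₀]; exact Ideal.subset_span (Set.mem_singleton _)
          have hz₀max : z₀ ∈ Ideal.span {(p : ℤ_[p])} := by
            rw [← PadicInt.maximalIdeal_eq_span_p]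
            exact IsLocalRing.le_maximalIdeal hqp.ne_top hz₀mem
          obtain ⟨y, hy⟩ := Ideal.mem_span_singleton'.mp hz₀max
          have hyp : y * (p : ℤ_[p]) ∈ q := by rw [hy]; exact hz₀mem
          have hpq : (p : ℤ_[p]) ∈ q := by
            rcases hqp.mem_or_mem hyp with hyq | hpmem
            · exfalso
              rw [hz₀] at hyq
              obtain ⟨w, hw⟩ := Ideal.mem_span_singleton'.mp hyq
              have hy0 : y ≠ 0 := by
                intro hcon; rw [hcon, zero_mul] at hy; exact hz0ne hy.symm
              have : y * (1 - w * (p : ℤ_[p]))  = 0 := by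
                have h5 : w * z₀ = y := hw
                calc y * (1 - w * (p : ℤ_[p])) = y - w * (y * (p : ℤ_[p])) := by ring
                  _ = y - w * z₀ := by rw [hy]
                  _ = y - y := by rw [h5]
                  _ = 0 := sub_self y
              rcases mul_eq_zero.mp this with h6 | h6
              · exact hy0 h6
              · have h7 : IsUnit (p : ℤ_[p]) := by
                  have h8 : w * (p : ℤ_[p]) = 1 := (sub_eq_zero.mp h6).symm
                  exact IsUnit.of_mul_eq_one w (by rw [mul_comm]; exact h8)
                exact PadicInt.p_nonunit h7
            · exact hpmem
          have hpP : (p : O') ∈ P := by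
            have := hpq
            rw [hq, Ideal.mem_comap, map_natCast] at this
            exact this
          exact Ideal.span_le.mpr (Set.singleton_subset_iff.mpr hpP)
        have hcm := Ideal.comap_map_of_surjective (Ideal.Quotient.mk J)
          Ideal.Quotient.mk_surjective P
        rw [← RingHom.ker_eq_comap_bot, Ideal.mk_ker] at hcm
        show Ideal.comap (Ideal.Quotient.mk J) (Ideal.map (Ideal.Quotient.mk J) P) = P
        rw [hcm]
        exact sup_eq_left.mpr hJP
    exact Set.Finite.subset ((Set.finite_univ.image _).insert ⊥) hsub
  exact IsPrincipalIdealRing.of_finite_primes hPfin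

end padic

set_option maxHeartbeats 1000000 in
/-- Let `Λ = O[[T]]` with `O` the ring of integers of a finite extension of `ℚ_p`.
If `I ⊆ A` are ideals of `Λ` with `A` of finite index in `Λ`, then
`I ⊆ Fitt_Λ(A/I)`. -/
theorem stmt0 (p : ℕ) [Fact p.Prime] (K : Type*) [Field K]
    [Algebra ℚ_[p] K] [FiniteDimensional ℚ_[p] K]
    [Algebra ℤ_[p] K] [IsScalarTower ℤ_[p] ℚ_[p] K]
    (Λ : Type*) [CommRing Λ]
    (e : Λ ≃+* PowerSeries (integralClosure ℤ_[p] K))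
    (I A : Ideal Λ) (hIA : I ≤ A) (hfin : Finite (Λ ⧸ A)) :
    I ≤ fittingIdeal Λ (↥A ⧸ (Submodule.comap A.subtype I)) := by
  classical
  haveI hpid : IsPrincipalIdealRing (integralClosure ℤ_[p] K) := integralClosure_pid p K
  intro x hx
  set I' : Ideal (PowerSeries (integralClosure ℤ_[p] K)) := Ideal.map (e : Λ →+* _) I with hI'
  set A' : Ideal (PowerSeries (integralClosure ℤ_[p] K)) := Ideal.map (e : Λ →+* _) A with hA'
  have hIA' : I' ≤ A' := Ideal.map_mono hIA
  haveI hfin' : Finite ((PowerSeries (integralClosure ℤ_[p] K)) ⧸ A') :=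
    Finite.of_equiv _ (Ideal.quotientEquiv A A' e rfl).toEquiv
  have hkex : ∃ k, (PowerSeries.X : PowerSeries (integralClosure ℤ_[p] K)) ^ k ∈ A' := by
    have key : ∀ a b : ℕ, a < b →
        (PowerSeries.X : PowerSeries (integralClosure ℤ_[p] K)) ^ a - PowerSeries.X ^ b ∈ A' →
        ∃ k, (PowerSeries.X : PowerSeries (integralClosure ℤ_[p] K)) ^ k ∈ A' := by
      intro a b hab hmem
      have hfac : (PowerSeries.X : PowerSeries (integralClosure ℤ_[p] K)) ^ a - PowerSeries.X ^ b
          = PowerSeries.X ^ a * (1 - PowerSeries.X ^ (b - a)) := by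
        rw [mul_sub, mul_one, ← pow_add, Nat.add_sub_cancel' (le_of_lt hab)]
      have hu : IsUnit ((1 : PowerSeries (integralClosure ℤ_[p] K)) - PowerSeries.X ^ (b - a)) := by
        rw [PowerSeries.isUnit_iff_constantCoeff]
        rw [map_sub, map_one, map_pow, PowerSeries.constantCoeff_X,
          zero_pow (by omega : b - a ≠ 0), sub_zero]
        exact isUnit_one
      obtain ⟨U, hU⟩ := hu
      refine ⟨a, ?_⟩
      have hXa : (PowerSeries.X : PowerSeries (integralClosure ℤ_[p] K)) ^ a
          = (PowerSeries.X ^ a - PowerSeries.X ^ b)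
            * ((U⁻¹ : (PowerSeries (integralClosure ℤ_[p] K))ˣ) : PowerSeries (integralClosure ℤ_[p] K)) := by
        rw [hfac, ← hU, mul_assoc, Units.mul_inv, mul_one]
      rw [hXa]
      exact Ideal.mul_mem_right _ _ hmem
    obtain ⟨a, b, hab, heq⟩ := Finite.exists_ne_map_eq_of_infinite
      (fun m : ℕ => Ideal.Quotient.mk A' (PowerSeries.X ^ m))
    rcases lt_or_gt_of_ne hab with h | h
    · exact key a b h (Ideal.Quotient.eq.mp heq)
    · exact key b a h (Ideal.Quotient.eq.mp heq.symm)
  obtain ⟨k, hk⟩ := hkex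
  have hmain := main_powerseries I' A' hIA' k hk
  have hcomap : ∀ (Jid : Ideal Λ),
      Ideal.comap (e : Λ →+* PowerSeries (integralClosure ℤ_[p] K))
        (Ideal.map (e : Λ →+* PowerSeries (integralClosure ℤ_[p] K)) Jid) = Jid := by
    intro Jid
    rw [Ideal.comap_map_of_surjective (e : Λ →+* PowerSeries (integralClosure ℤ_[p] K))
      e.surjective Jid]
    have hbot : Ideal.comap (e : Λ →+* PowerSeries (integralClosure ℤ_[p] K))
        (⊥ : Ideal (PowerSeries (integralClosure ℤ_[p] K))) = ⊥ := by
      rw [← RingHom.ker_eq_comap_bot]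
      exact (RingHom.ker_eq_bot_iff_eq_zero _).mpr (fun u hu => e.injective (by simpa using hu))
    rw [hbot, sup_bot_eq]
  have hmemA' : ∀ a : Λ, a ∈ A → e a ∈ A' := fun a ha => Ideal.mem_map_of_mem _ ha
  have hmemI' : ∀ a : Λ, a ∈ I → e a ∈ I' := fun a ha => Ideal.mem_map_of_mem _ ha
  have hmemA : ∀ y, y ∈ A' → e.symm y ∈ A := by
    intro y hy
    have h1 : e (e.symm y) ∈ A' := by rwa [e.apply_symm_apply]
    have h2 : e.symm y ∈ Ideal.comap (e : Λ →+* PowerSeries (integralClosure ℤ_[p] K)) A' := h1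
    rwa [hA', hcomap] at h2
  have hmemI : ∀ y, y ∈ I' → e.symm y ∈ I := by
    intro y hy
    have h1 : e (e.symm y) ∈ I' := by rwa [e.apply_symm_apply]
    have h2 : e.symm y ∈ Ideal.comap (e : Λ →+* PowerSeries (integralClosure ℤ_[p] K)) I' := h1
    rwa [hI', hcomap] at h2
  set αₗ : ↥A →ₛₗ[(e : Λ →+* PowerSeries (integralClosure ℤ_[p] K))] ↥A' :=
    { toFun := fun a => ⟨e a.1, hmemA' a.1 a.2⟩
      map_add' := fun a b => Subtype.ext (by simp)
      map_smul' := fun r a => Subtype.ext (map_mul e r a.1) } with hαₗ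
  set βₗ : ↥A' →ₛₗ[(e.symm : PowerSeries (integralClosure ℤ_[p] K) →+* Λ)] ↥A :=
    { toFun := fun a => ⟨e.symm a.1, hmemA a.1 a.2⟩
      map_add' := fun a b => Subtype.ext (by simp)
      map_smul' := fun r a => Subtype.ext (map_mul e.symm r a.1) } with hβₗ
  set N : Submodule Λ ↥A := Submodule.comap A.subtype I with hN
  set N' : Submodule (PowerSeries (integralClosure ℤ_[p] K)) ↥A' :=
    Submodule.comap A'.subtype I' with hN'
  have hle : N ≤ Submodule.comap αₗ N' := fun a ha => hmemI' a.1 ha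
  have hle' : N' ≤ Submodule.comap βₗ N := fun a ha => hmemI a.1 ha
  set σₗ := N.mapQ N' αₗ hle with hσₗ
  set σ'ₗ := N'.mapQ N βₗ hle' with hσ'ₗ
  have hinv1 : ∀ m, σ'ₗ (σₗ m) = m := by
    intro m
    obtain ⟨a, rfl⟩ := Submodule.mkQ_surjective N m
    rw [Submodule.mkQ_apply, hσₗ, Submodule.mapQ_apply, hσ'ₗ, Submodule.mapQ_apply]
    congr 1
    exact Subtype.ext (e.symm_apply_apply a.1)
  have hinv2 : ∀ m, σₗ (σ'ₗ m) = m := by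
    intro m
    obtain ⟨a, rfl⟩ := Submodule.mkQ_surjective N' m
    rw [Submodule.mkQ_apply, hσ'ₗ, Submodule.mapQ_apply, hσₗ, Submodule.mapQ_apply]
    congr 1
    exact Subtype.ext (e.apply_symm_apply a.1)
  set σ : (↥A ⧸ N) ≃+ (↥A' ⧸ N') :=
    { toFun := σₗ
      invFun := σ'ₗ
      left_inv := hinv1
      right_inv := hinv2
      map_add' := map_add σₗ } with hσdef
  have hσ : ∀ (r : Λ) (m : ↥A ⧸ N), σ (r • m) = e r • σ m := by
    intro r m
    obtain ⟨a, rfl⟩ := Submodule.mkQ_surjective N m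
    rw [Submodule.mkQ_apply]
    show σₗ (r • Submodule.Quotient.mk a) = e r • σₗ (Submodule.Quotient.mk a)
    rw [← Submodule.Quotient.mk_smul, hσₗ, Submodule.mapQ_apply, Submodule.mapQ_apply,
      ← Submodule.Quotient.mk_smul]
    congr 1
    exact Subtype.ext (map_mul e r a.1)
  exact mem_fittingIdeal_of_transport e σ hσ (hmain (hmemI' x hx))
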